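/- arXiv:0904.2310 — 6 statements merged into one kernel-verified Lean document; each statement's English description precedes it below -/
import Mathlib

section
/- Let Q be a finite set with demands d_i ∈ (0,1] for each i ∈ Q. If Σ_{i∈Q} d_i ≤ 1, then Σ_{i∈Q} s(d_i) ≤ 0.692. -/
/-- For `x ∈ (0,1]`, with `k = ⌊1/x⌋`, the slack is `s(x) = 1/(k(k+1))`. -/
noncomputable def slack (x : ℝ) : ℝ :=
  1 / ((⌊1 / x⌋₊ : ℝ) * ((⌊1 / x⌋₊ : ℝ) + 1))

lemma le_floor_inv {d : ℝ} {m : ℕ} (hd : 0 < d) (hm : 1 ≤ m) (h : d ≤ 1 / (m : ℝ)) :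
    m ≤ ⌊1 / d⌋₊ := by
  apply Nat.le_floor
  have hm' : (0 : ℝ) < m := by exact_mod_cast hm
  rw [le_div_iff₀ hd]
  calc (m : ℝ) * d ≤ (m : ℝ) * (1 / m) := by
        exact mul_le_mul_of_nonneg_left h hm'.le
    _ = 1 := by field_simp

lemma inv_succ_lt {d : ℝ} (hd : 0 < d) : 1 / ((⌊1 / d⌋₊ : ℝ) + 1) < d := by
  have h := Nat.lt_floor_add_one (1 / d)
  have hpos : (0 : ℝ) < (⌊1 / d⌋₊ : ℝ) + 1 := by positivity
  rw [div_lt_iff₀ hpos]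
  rw [div_lt_iff₀ hd] at h
  linarith [h]

lemma slack_le_const {d : ℝ} {m : ℕ} (hd : 0 < d) (hm : 1 ≤ m) (h : d ≤ 1 / (m : ℝ)) :
    slack d ≤ 1 / ((m : ℝ) * ((m : ℝ) + 1)) := by
  have hk : m ≤ ⌊1 / d⌋₊ := le_floor_inv hd hm h
  have hkr : (m : ℝ) ≤ (⌊1 / d⌋₊ : ℝ) := by exact_mod_cast hk
  have hm' : (0 : ℝ) < m := by exact_mod_cast hm
  unfold slack
  apply one_div_le_one_div_of_le
  · positivity
  · nlinarith

lemma slack_le_div {d : ℝ} {m : ℕ} (hd : 0 < d) (hm : 1 ≤ m) (h : d ≤ 1 / (m : ℝ)) :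
    slack d ≤ d / (m : ℝ) := by
  have hk : m ≤ ⌊1 / d⌋₊ := le_floor_inv hd hm h
  have hkr : (m : ℝ) ≤ (⌊1 / d⌋₊ : ℝ) := by exact_mod_cast hk
  have hm' : (0 : ℝ) < m := by exact_mod_cast hm
  have hkpos : (0 : ℝ) < (⌊1 / d⌋₊ : ℝ) := lt_of_lt_of_le hm' hkr
  have hlt : 1 / ((⌊1 / d⌋₊ : ℝ) + 1) < d := inv_succ_lt hd
  unfold slack
  rw [div_le_div_iff₀ (by positivity) hm']
  have h1 : 1 < d * ((⌊1 / d⌋₊ : ℝ) + 1) := by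
    rw [div_lt_iff₀ (by positivity)] at hlt
    linarith
  nlinarith [mul_le_mul_of_nonneg_right h1.le hkpos.le]

lemma sum_slack_le {ι : Type*} (Q : Finset ι) (d : ι → ℝ) (m : ℕ) (hm : 1 ≤ m)
    (hd : ∀ i ∈ Q, 0 < d i) (hle : ∀ i ∈ Q, d i ≤ 1 / (m : ℝ)) :
    ∑ i ∈ Q, slack (d i) ≤ (∑ i ∈ Q, d i) / (m : ℝ) := by
  rw [Finset.sum_div]
  exact Finset.sum_le_sum fun i hi => slack_le_div (hd i hi) hm (hle i hi)

/-- If a finite set of demands in `(0,1]` has total demand at most `1`,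
then the total slack is at most `0.692`. -/
theorem slack_sum_le {ι : Type*} (Q : Finset ι) (d : ι → ℝ)
    (hd : ∀ i ∈ Q, 0 < d i ∧ d i ≤ 1)
    (hsum : ∑ i ∈ Q, d i ≤ 1) :
    ∑ i ∈ Q, slack (d i) ≤ 0.692 := by
  classical
  have hdpos : ∀ i ∈ Q, 0 < d i := fun i hi => (hd i hi).1
  have hdnn : ∀ i ∈ Q, 0 ≤ d i := fun i hi => (hdpos i hi).le
  by_cases h0 : ∀ i ∈ Q, d i ≤ 1 / ((2 : ℕ) : ℝ)
  · -- all items ≤ 1/2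
    have := sum_slack_le Q d 2 (by norm_num) hdpos h0
    have h2 : (∑ i ∈ Q, d i) / ((2 : ℕ) : ℝ) ≤ 1 / 2 := by
      push_cast
      linarith
    linarith [this, h2]
  · push_neg at h0
    obtain ⟨i₀, hi₀Q, hi₀⟩ := h0
    set Q1 := Q.erase i₀ with hQ1
    have hsplit0 : ∑ i ∈ Q, slack (d i) = slack (d i₀) + ∑ i ∈ Q1, slack (d i) := by
      rw [← Finset.add_sum_erase Q _ hi₀Q]
    have hdsplit0 : ∑ i ∈ Q, d i = d i₀ + ∑ i ∈ Q1, d i := by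
      rw [← Finset.add_sum_erase Q _ hi₀Q]
    have hQ1sub : Q1 ⊆ Q := Finset.erase_subset _ _
    have hQ1pos : ∀ i ∈ Q1, 0 < d i := fun i hi => hdpos i (hQ1sub hi)
    have hQ1sum : ∑ i ∈ Q1, d i < 1 / 2 := by
      have : ((2:ℕ):ℝ) = 2 := by norm_num
      rw [this] at hi₀
      linarith [hdsplit0 ▸ hsum]
    have hs0 : slack (d i₀) ≤ 1 / 2 := by
      have := slack_le_const (hdpos i₀ hi₀Q) (le_refl 1)
        (by push_cast; linarith [(hd i₀ hi₀Q).2])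
      norm_num at this
      linarith
    by_cases h1 : ∀ i ∈ Q1, d i ≤ 1 / ((3 : ℕ) : ℝ)
    · -- remaining items ≤ 1/3
      have := sum_slack_le Q1 d 3 (by norm_num) hQ1pos h1
      have hsum1 : (∑ i ∈ Q1, d i) / ((3 : ℕ) : ℝ) ≤ (1/2) / 3 := by
        push_cast
        linarith
      rw [hsplit0]
      norm_num at hsum1 ⊢
      linarith
    · push_neg at h1
      obtain ⟨i₁, hi₁Q, hi₁⟩ := h1
      have hi₁' : (1:ℝ)/3 < d i₁ := by
        have : ((3:ℕ):ℝ) = 3 := by norm_num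
        rw [this] at hi₁; exact hi₁
      set Q2 := Q1.erase i₁ with hQ2
      have hsplit1 : ∑ i ∈ Q1, slack (d i) = slack (d i₁) + ∑ i ∈ Q2, slack (d i) := by
        rw [← Finset.add_sum_erase Q1 _ hi₁Q]
      have hdsplit1 : ∑ i ∈ Q1, d i = d i₁ + ∑ i ∈ Q2, d i := by
        rw [← Finset.add_sum_erase Q1 _ hi₁Q]
      have hQ2sub : Q2 ⊆ Q1 := Finset.erase_subset _ _
      have hQ2pos : ∀ i ∈ Q2, 0 < d i := fun i hi => hQ1pos i (hQ2sub hi)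
      -- d i₁ ≤ sum over Q1 < 1/2
      have hi₁le : d i₁ ≤ ∑ i ∈ Q1, d i :=
        Finset.single_le_sum (fun i hi => (hQ1pos i hi).le) hi₁Q
      have hi₁half : d i₁ ≤ 1 / ((2:ℕ):ℝ) := by
        push_cast
        linarith
      have hs1 : slack (d i₁) ≤ 1 / 6 := by
        have := slack_le_const (hQ1pos i₁ hi₁Q) (by norm_num : 1 ≤ 2) hi₁half
        norm_num at this
        linarith
      have hQ2sum : ∑ i ∈ Q2, d i < 1 / 6 := by
        linarith [hdsplit1 ▸ hQ1sum]
      by_cases h2 : ∀ i ∈ Q2, d i ≤ 1 / ((7 : ℕ) : ℝ)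
      · have := sum_slack_le Q2 d 7 (by norm_num) hQ2pos h2
        have hsum2 : (∑ i ∈ Q2, d i) / ((7 : ℕ) : ℝ) ≤ (1/6) / 7 := by
          push_cast
          have h2nn : 0 ≤ ∑ i ∈ Q2, d i :=
            Finset.sum_nonneg fun i hi => (hQ2pos i hi).le
          linarith
        rw [hsplit0, hsplit1]
        norm_num at hsum2 ⊢
        linarith
      · push_neg at h2
        obtain ⟨i₂, hi₂Q, hi₂⟩ := h2
        set Q3 := Q2.erase i₂ with hQ3
        have hsplit2 : ∑ i ∈ Q2, slack (d i) = slack (d i₂) + ∑ i ∈ Q3, slack (d i) := by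
          rw [← Finset.add_sum_erase Q2 _ hi₂Q]
        have hdsplit2 : ∑ i ∈ Q2, d i = d i₂ + ∑ i ∈ Q3, d i := by
          rw [← Finset.add_sum_erase Q2 _ hi₂Q]
        have hQ3sub : Q3 ⊆ Q2 := Finset.erase_subset _ _
        have hQ3pos : ∀ i ∈ Q3, 0 < d i := fun i hi => hQ2pos i (hQ3sub hi)
        have hi₂' : (1:ℝ)/7 < d i₂ := by
          have : ((7:ℕ):ℝ) = 7 := by norm_num
          rw [this] at hi₂; exact hi₂
        have hi₂le : d i₂ ≤ ∑ i ∈ Q2, d i :=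
          Finset.single_le_sum (fun i hi => (hQ2pos i hi).le) hi₂Q
        have hi₂sixth : d i₂ ≤ 1 / ((6:ℕ):ℝ) := by
          push_cast
          linarith
        have hs2 : slack (d i₂) ≤ 1 / 42 := by
          have := slack_le_const (hQ2pos i₂ hi₂Q) (by norm_num : 1 ≤ 6) hi₂sixth
          norm_num at this
          linarith
        have hQ3sum : ∑ i ∈ Q3, d i < 1 / 42 := by
          linarith [hdsplit2 ▸ hQ2sum]
        have hQ3le : ∀ i ∈ Q3, d i ≤ 1 / ((42:ℕ):ℝ) := by
          intro i hi
          have : d i ≤ ∑ j ∈ Q3, d j :=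
            Finset.single_le_sum (fun j hj => (hQ3pos j hj).le) hi
          push_cast
          linarith
        have htail := sum_slack_le Q3 d 42 (by norm_num) hQ3pos hQ3le
        have h3nn : 0 ≤ ∑ i ∈ Q3, d i :=
          Finset.sum_nonneg fun i hi => (hQ3pos i hi).le
        have hsum3 : (∑ i ∈ Q3, d i) / ((42:ℕ):ℝ) ≤ (1/42) / 42 := by
          push_cast
          linarith
        rw [hsplit0, hsplit1, hsplit2]
        norm_num at hsum3 ⊢
        linarith
end

section
/- Let Q be a finite set with demands d_i ∈ (0, 1/2] for each i ∈ Q (i.e., no element has demand exceeding 1/2). If Σ_{i∈Q} d_i ≤ 1, then Σ_{i∈Q} s(d_i) < 0.4232. -/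
lemma slack_le_const_s5 (n : ℕ) (hn : 1 ≤ n) {x : ℝ} (hx : 0 < x) (hxn : x * n ≤ 1) :
    slack x ≤ 1 / ((n : ℝ) * ((n : ℝ) + 1)) := by
  have hn' : (1:ℝ) ≤ (n:ℝ) := by exact_mod_cast hn
  have hk : n ≤ ⌊1/x⌋₊ := Nat.le_floor (by rw [le_div_iff₀ hx]; linarith [mul_comm x (n:ℝ)])
  have hk' : (n:ℝ) ≤ (⌊1/x⌋₊ : ℝ) := by exact_mod_cast hk
  unfold slack
  apply one_div_le_one_div_of_le (by nlinarith)
  nlinarith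

lemma slack_le_lin (n : ℕ) (hn : 1 ≤ n) {x : ℝ} (hx : 0 < x) (hxn : x * n ≤ 1) :
    slack x ≤ x / n := by
  have hn' : (1:ℝ) ≤ (n:ℝ) := by exact_mod_cast hn
  have hk : n ≤ ⌊1/x⌋₊ := Nat.le_floor (by rw [le_div_iff₀ hx]; linarith [mul_comm x (n:ℝ)])
  have hk' : (n:ℝ) ≤ (⌊1/x⌋₊ : ℝ) := by exact_mod_cast hk
  have hfl : 1/x < (⌊1/x⌋₊ : ℝ) + 1 := Nat.lt_floor_add_one _
  have hx1 : 1 < x * ((⌊1/x⌋₊ : ℝ) + 1) := by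
    have := (div_lt_iff₀ hx).mp hfl
    linarith [mul_comm x ((⌊1/x⌋₊ : ℝ) + 1)]
  unfold slack
  rw [div_le_div_iff₀ (by nlinarith) (by linarith)]
  nlinarith

lemma card_le_of_lt_sum {ι : Type*} {S : Finset ι} {d : ι → ℝ} {c T : ℝ} (hc : 0 < c)
    (h : ∀ i ∈ S, c < d i) (hT : ∑ i ∈ S, d i ≤ T) {m : ℕ} (hm : T ≤ (m+1)*c) :
    S.card ≤ m := by
  by_contra hcon
  push_neg at hcon
  have hne : S.Nonempty := Finset.card_pos.mp (by omega)
  have h1 : ∑ _i ∈ S, c < ∑ i ∈ S, d i := Finset.sum_lt_sum_of_nonempty hne h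
  rw [Finset.sum_const, nsmul_eq_mul] at h1
  have h2 : ((m:ℝ)+1) ≤ (S.card : ℝ) := by exact_mod_cast hcon
  nlinarith


/-- If a finite set of demands in `(0,1/2]` has total demand at most `1`,
then the total slack is less than `0.4232`. -/
theorem slack_sum_lt_of_no_large {ι : Type*} (Q : Finset ι) (d : ι → ℝ)
    (hd : ∀ i ∈ Q, 0 < d i ∧ d i ≤ 1 / 2)
    (hsum : ∑ i ∈ Q, d i ≤ 1) :
    ∑ i ∈ Q, slack (d i) < 0.4232 := by
  classical
  set A := Q.filter (fun i => 1/3 < d i) with hAdef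
  set Ac := Q.filter (fun i => ¬ 1/3 < d i) with hAcdef
  have hsplitf : (∑ i ∈ A, slack (d i)) + (∑ i ∈ Ac, slack (d i)) = ∑ i ∈ Q, slack (d i) :=
    Finset.sum_filter_add_sum_filter_not Q _ _
  have hsplitd : (∑ i ∈ A, d i) + (∑ i ∈ Ac, d i) = ∑ i ∈ Q, d i :=
    Finset.sum_filter_add_sum_filter_not Q _ _
  have hAQ : A ⊆ Q := Finset.filter_subset _ _
  have hAcQ : Ac ⊆ Q := Finset.filter_subset _ _
  have hAgt : ∀ i ∈ A, 1/3 < d i := fun i hi => (Finset.mem_filter.mp hi).2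
  have hAcle : ∀ i ∈ Ac, 0 < d i ∧ d i ≤ 1/3 := fun i hi =>
    ⟨(hd i (hAcQ hi)).1, not_lt.mp (Finset.mem_filter.mp hi).2⟩
  have hdApos : (0:ℝ) ≤ ∑ i ∈ A, d i :=
    Finset.sum_nonneg (fun i hi => (hd i (hAQ hi)).1.le)
  have hdAcpos : (0:ℝ) ≤ ∑ i ∈ Ac, d i :=
    Finset.sum_nonneg (fun i hi => (hAcle i hi).1.le)
  have hdAle : ∑ i ∈ A, d i ≤ 1 := by linarith
  have hAcard : A.card ≤ 2 :=
    card_le_of_lt_sum (by norm_num) hAgt hdAle (by norm_num)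
  have hfA : ∑ i ∈ A, slack (d i) ≤ (A.card : ℝ) * (1/6) := by
    have := Finset.sum_le_card_nsmul A (fun i => slack (d i)) (1/6) (fun i hi => by
      have h2 := hd i (hAQ hi)
      have := slack_le_const_s5 2 (by norm_num) h2.1 (by push_cast; linarith)
      norm_num at this ⊢
      linarith)
    rwa [nsmul_eq_mul] at this
  have hdA : (A.card : ℝ) * (1/3) ≤ ∑ i ∈ A, d i := by
    have := Finset.card_nsmul_le_sum A d (1/3) (fun i hi => (hAgt i hi).le)
    rwa [nsmul_eq_mul] at this
  by_cases hA2 : A.card = 2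
  · -- two large items
    have hdAc2 : ∑ i ∈ Ac, d i ≤ 1/3 := by
      rw [hA2] at hdA; push_cast at hdA; linarith
    set B := Ac.filter (fun i => 1/4 < d i) with hBdef
    set Bc := Ac.filter (fun i => ¬ 1/4 < d i) with hBcdef
    have hsplitf2 : (∑ i ∈ B, slack (d i)) + (∑ i ∈ Bc, slack (d i)) = ∑ i ∈ Ac, slack (d i) :=
      Finset.sum_filter_add_sum_filter_not Ac _ _
    have hsplitd2 : (∑ i ∈ B, d i) + (∑ i ∈ Bc, d i) = ∑ i ∈ Ac, d i :=
      Finset.sum_filter_add_sum_filter_not Ac _ _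
    have hBAc : B ⊆ Ac := Finset.filter_subset _ _
    have hBcAc : Bc ⊆ Ac := Finset.filter_subset _ _
    have hBgt : ∀ i ∈ B, 1/4 < d i := fun i hi => (Finset.mem_filter.mp hi).2
    have hBcle : ∀ i ∈ Bc, 0 < d i ∧ d i ≤ 1/4 := fun i hi =>
      ⟨(hAcle i (hBcAc hi)).1, not_lt.mp (Finset.mem_filter.mp hi).2⟩
    have hdBpos : (0:ℝ) ≤ ∑ i ∈ B, d i :=
      Finset.sum_nonneg (fun i hi => (hAcle i (hBAc hi)).1.le)
    have hdBcpos : (0:ℝ) ≤ ∑ i ∈ Bc, d i :=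
      Finset.sum_nonneg (fun i hi => (hBcle i hi).1.le)
    have hdBle : ∑ i ∈ B, d i ≤ 1/3 := by linarith
    have hBcard : B.card ≤ 1 :=
      card_le_of_lt_sum (by norm_num) hBgt hdBle (by norm_num)
    have hfB : ∑ i ∈ B, slack (d i) ≤ (B.card : ℝ) * (1/12) := by
      have := Finset.sum_le_card_nsmul B (fun i => slack (d i)) (1/12) (fun i hi => by
        have h2 := hAcle i (hBAc hi)
        have := slack_le_const_s5 3 (by norm_num) h2.1 (by push_cast; linarith)
        norm_num at this ⊢
        linarith)
      rwa [nsmul_eq_mul] at this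
    have hdB : (B.card : ℝ) * (1/4) ≤ ∑ i ∈ B, d i := by
      have := Finset.card_nsmul_le_sum B d (1/4) (fun i hi => (hBgt i hi).le)
      rwa [nsmul_eq_mul] at this
    by_cases hB1 : B.card = 1
    · -- one medium item
      have hdBc2 : ∑ i ∈ Bc, d i ≤ 1/12 := by
        rw [hB1] at hdB; push_cast at hdB; linarith
      have hBc_small : ∀ i ∈ Bc, d i ≤ 1/12 := fun i hi =>
        le_trans (Finset.single_le_sum (fun j hj => (hBcle j hj).1.le) hi) hdBc2
      set C := Bc.filter (fun i => 1/13 < d i) with hCdef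
      set Cc := Bc.filter (fun i => ¬ 1/13 < d i) with hCcdef
      have hsplitf3 : (∑ i ∈ C, slack (d i)) + (∑ i ∈ Cc, slack (d i)) = ∑ i ∈ Bc, slack (d i) :=
        Finset.sum_filter_add_sum_filter_not Bc _ _
      have hsplitd3 : (∑ i ∈ C, d i) + (∑ i ∈ Cc, d i) = ∑ i ∈ Bc, d i :=
        Finset.sum_filter_add_sum_filter_not Bc _ _
      have hCBc : C ⊆ Bc := Finset.filter_subset _ _
      have hCcBc : Cc ⊆ Bc := Finset.filter_subset _ _
      have hCgt : ∀ i ∈ C, 1/13 < d i := fun i hi => (Finset.mem_filter.mp hi).2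
      have hCcle : ∀ i ∈ Cc, 0 < d i ∧ d i ≤ 1/13 := fun i hi =>
        ⟨(hBcle i (hCcBc hi)).1, not_lt.mp (Finset.mem_filter.mp hi).2⟩
      have hdCpos : (0:ℝ) ≤ ∑ i ∈ C, d i :=
        Finset.sum_nonneg (fun i hi => (hBcle i (hCBc hi)).1.le)
      have hdCcpos : (0:ℝ) ≤ ∑ i ∈ Cc, d i :=
        Finset.sum_nonneg (fun i hi => (hCcle i hi).1.le)
      have hdCle : ∑ i ∈ C, d i ≤ 1/12 := by linarith
      have hCcard : C.card ≤ 1 :=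
        card_le_of_lt_sum (by norm_num) hCgt hdCle (by norm_num)
      have hfC : ∑ i ∈ C, slack (d i) ≤ (C.card : ℝ) * (1/156) := by
        have := Finset.sum_le_card_nsmul C (fun i => slack (d i)) (1/156) (fun i hi => by
          have h2 := (hBcle i (hCBc hi)).1
          have h3 := hBc_small i (hCBc hi)
          have := slack_le_const_s5 12 (by norm_num) h2 (by push_cast; linarith)
          norm_num at this ⊢
          linarith)
        rwa [nsmul_eq_mul] at this
      have hdC : (C.card : ℝ) * (1/13) ≤ ∑ i ∈ C, d i := by
        have := Finset.card_nsmul_le_sum C d (1/13) (fun i hi => (hCgt i hi).le)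
        rwa [nsmul_eq_mul] at this
      by_cases hC1 : C.card = 1
      · -- one item in (1/13, 1/12]
        have hdCc2 : ∑ i ∈ Cc, d i ≤ 1/12 - 1/13 := by
          rw [hC1] at hdC; push_cast at hdC; linarith
        have hCc_small : ∀ i ∈ Cc, d i ≤ 1/156 := fun i hi => by
          have := le_trans (Finset.single_le_sum (fun j hj => (hCcle j hj).1.le) hi) hdCc2
          linarith
        have hfCc : ∑ i ∈ Cc, slack (d i) ≤ (∑ i ∈ Cc, d i) / 156 := by
          rw [Finset.sum_div]
          refine Finset.sum_le_sum (fun i hi => ?_)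
          have h2 := (hCcle i hi).1
          have h3 := hCc_small i hi
          have := slack_le_lin 156 (by norm_num) h2 (by push_cast; linarith)
          push_cast at this; linarith
        rw [hA2] at hfA; rw [hB1] at hfB; rw [hC1] at hfC
        push_cast at hfA hfB hfC
        have : (∑ i ∈ Cc, d i) / 156 ≤ (1/12 - 1/13)/156 := by linarith
        rw [← hsplitf]; rw [← hsplitf2]; rw [← hsplitf3]
        norm_num
        linarith
      · -- no item in (1/13, 1/12]
        have hC0 : C.card = 0 := by omega
        rw [hC0] at hfC hdC; push_cast at hfC hdC
        have hdCc2 : ∑ i ∈ Cc, d i ≤ 1/12 := by linarith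
        have hfCc : ∑ i ∈ Cc, slack (d i) ≤ (∑ i ∈ Cc, d i) / 13 := by
          rw [Finset.sum_div]
          refine Finset.sum_le_sum (fun i hi => ?_)
          have h2 := hCcle i hi
          have := slack_le_lin 13 (by norm_num) h2.1 (by push_cast; linarith [h2.2])
          push_cast at this; linarith
        rw [hA2] at hfA; rw [hB1] at hfB
        push_cast at hfA hfB
        have : (∑ i ∈ Cc, d i) / 13 ≤ (1/12)/13 := by linarith
        rw [← hsplitf]; rw [← hsplitf2]; rw [← hsplitf3]
        norm_num
        linarith
    · -- no medium item
      have hB0 : B.card = 0 := by omega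
      rw [hB0] at hfB hdB; push_cast at hfB hdB
      have hdBc2 : ∑ i ∈ Bc, d i ≤ 1/3 := by linarith
      have hfBc : ∑ i ∈ Bc, slack (d i) ≤ (∑ i ∈ Bc, d i) / 4 := by
        rw [Finset.sum_div]
        refine Finset.sum_le_sum (fun i hi => ?_)
        have h2 := hBcle i hi
        have := slack_le_lin 4 (by norm_num) h2.1 (by push_cast; linarith [h2.2])
        push_cast at this; linarith
      rw [hA2] at hfA; push_cast at hfA
      have : (∑ i ∈ Bc, d i) / 4 ≤ (1/3)/4 := by linarith
      rw [← hsplitf]; rw [← hsplitf2]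
      norm_num
      linarith
  · -- at most one large item
    have hA1 : (A.card : ℝ) ≤ 1 := by
      have : A.card ≤ 1 := by omega
      exact_mod_cast this
    have hfAc : ∑ i ∈ Ac, slack (d i) ≤ (∑ i ∈ Ac, d i) / 3 := by
      rw [Finset.sum_div]
      refine Finset.sum_le_sum (fun i hi => ?_)
      have h2 := hAcle i hi
      have := slack_le_lin 3 (by norm_num) h2.1 (by push_cast; linarith [h2.2])
      push_cast at this; linarith
    have hdAc2 : ∑ i ∈ Ac, d i ≤ 1 - (A.card : ℝ) * (1/3) := by linarith
    rw [← hsplitf]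
    norm_num
    nlinarith [hfA, hfAc, hdAc2, hA1]
end

section
/- Let λ ≥ 2 be an integer and let Q be a finite set with demands d_i satisfying 1/(λ+1) < d_i ≤ 1 for every i ∈ Q. If Σ_{i∈Q} d_i > (λ−1)/λ, then Σ_{i∈Q} s(d_i) > (λ−1)/(λ(λ+1)). -/
lemma slack_ge_aux (lam : ℕ) (x : ℝ) (hx1 : 1 / ((lam : ℝ) + 1) < x) (hx2 : x ≤ 1) :
    x / ((lam : ℝ) + 1) ≤ slack x := by
  have hlampos : (0 : ℝ) < (lam : ℝ) + 1 := by positivity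
  have hx0 : 0 < x := lt_trans (by positivity) hx1
  set k := ⌊1 / x⌋₊ with hk
  have hk1 : 1 ≤ k := Nat.le_floor (by rw [le_div_iff₀ hx0]; push_cast; linarith)
  have hkle : (k : ℝ) ≤ 1 / x := Nat.floor_le (by positivity)
  have hxk : x * (k : ℝ) ≤ 1 := by
    rw [le_div_iff₀ hx0] at hkle; linarith
  have hklam : (k : ℝ) ≤ (lam : ℝ) := by
    have : 1 / x < (lam : ℝ) + 1 := by
      rw [div_lt_iff₀ hx0]
      rw [div_lt_iff₀ hlampos] at hx1
      linarith
    have hk' : k < lam + 1 :=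
      (Nat.floor_lt (n := lam + 1) (by positivity : (0:ℝ) ≤ 1 / x)).mpr (by push_cast; linarith)
    exact_mod_cast Nat.lt_succ_iff.mp hk'
  have hk1' : (1 : ℝ) ≤ (k : ℝ) := by exact_mod_cast hk1
  unfold slack
  rw [← hk, div_le_div_iff₀ hlampos (by nlinarith)]
  nlinarith [mul_le_mul_of_nonneg_right hxk (by linarith : (0:ℝ) ≤ (k:ℝ) + 1)]

/-- If all demands of a finite set exceed `1/(λ+1)` (and are at most `1`), and the total
demand exceeds `(λ-1)/λ`, then the total slack exceeds `(λ-1)/(λ(λ+1))`. -/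
theorem slack_sum_gt {ι : Type*} (lam : ℕ) (hlam : 2 ≤ lam)
    (Q : Finset ι) (d : ι → ℝ)
    (hd : ∀ i ∈ Q, 1 / ((lam : ℝ) + 1) < d i ∧ d i ≤ 1)
    (hsum : ((lam : ℝ) - 1) / (lam : ℝ) < ∑ i ∈ Q, d i) :
    ((lam : ℝ) - 1) / ((lam : ℝ) * ((lam : ℝ) + 1)) < ∑ i ∈ Q, slack (d i) := by
  have hlampos : (0 : ℝ) < (lam : ℝ) := by
    have : (0 : ℕ) < lam := by omega
    exact_mod_cast this
  have h1 : (∑ i ∈ Q, d i) / ((lam : ℝ) + 1) ≤ ∑ i ∈ Q, slack (d i) := by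
    rw [Finset.sum_div]
    exact Finset.sum_le_sum fun i hi => slack_ge_aux lam (d i) (hd i hi).1 (hd i hi).2
  have h2 : ((lam : ℝ) - 1) / ((lam : ℝ) * ((lam : ℝ) + 1)) <
      (∑ i ∈ Q, d i) / ((lam : ℝ) + 1) := by
    rw [← div_div]
    gcongr
  linarith
end

section
/- Let A = R(r, α) be a nonempty antenna set, let i = min A and j = max A, and suppose i < j. Then r_i ≤ 1/(θ_j − θ_i) and r_j ≤ 1/(θ_j − θ_i) (so i and j are compatible), and A ⊆ A[i,j] = R(1/(θ_j − θ_i), θ_i). -/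
/-- The antenna set `R(rad, α)`: points within radial reach `rad` and angular
sector `[α, α + 1/rad]`. -/
noncomputable def antennaSet (n : ℕ) (r θ : Fin n → ℝ) (rad α : ℝ) : Finset (Fin n) :=
  Finset.univ.filter (fun j => r j ≤ rad ∧ α ≤ θ j ∧ θ j ≤ α + 1 / rad)

/-- If `A = R(rad, α)` is a nonempty antenna set, `i = min A`, `j = max A` and `i < j`,
then `r_i ≤ 1/(θ_j - θ_i)`, `r_j ≤ 1/(θ_j - θ_i)` (so `i` and `j` are compatible),
and `A ⊆ A[i,j] = R(1/(θ_j - θ_i), θ_i)`. -/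
theorem antennaSet_subset_canonical (n : ℕ) (r θ : Fin n → ℝ)
    (hr : ∀ j, 0 < r j) (hθ : StrictMono θ)
    (rad α : ℝ) (hrad : 0 < rad)
    (A : Finset (Fin n)) (hA : A = antennaSet n r θ rad α) (hne : A.Nonempty)
    (i j : Fin n) (hi : i = A.min' hne) (hj : j = A.max' hne) (hij : i < j) :
    r i ≤ 1 / (θ j - θ i) ∧ r j ≤ 1 / (θ j - θ i) ∧
    A ⊆ antennaSet n r θ (1 / (θ j - θ i)) (θ i) := by
  have hmem : ∀ k ∈ A, r k ≤ rad ∧ α ≤ θ k ∧ θ k ≤ α + 1 / rad := by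
    intro k hk
    rw [hA, antennaSet, Finset.mem_filter] at hk
    exact hk.2
  have hiA : i ∈ A := hi ▸ A.min'_mem hne
  have hjA : j ∈ A := hj ▸ A.max'_mem hne
  obtain ⟨hri, hαi, hθi⟩ := hmem i hiA
  obtain ⟨hrj, hαj, hθj⟩ := hmem j hjA
  have hd0 : 0 < θ j - θ i := sub_pos.mpr (hθ hij)
  have hdr : (θ j - θ i) * rad ≤ 1 := by
    have : θ j - θ i ≤ 1 / rad := by linarith
    exact (le_div_iff₀ hrad).mp this
  have hrad_le : rad ≤ 1 / (θ j - θ i) := by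
    rw [le_div_iff₀ hd0]; linarith
  refine ⟨hri.trans hrad_le, hrj.trans hrad_le, ?_⟩
  intro k hk
  obtain ⟨hrk, hαk, hθk⟩ := hmem k hk
  have hik : θ i ≤ θ k := hθ.monotone (hi ▸ A.min'_le k hk)
  have hkj : θ k ≤ θ j := hθ.monotone (hj ▸ A.le_max' k hk)
  rw [antennaSet, Finset.mem_filter]
  refine ⟨Finset.mem_univ k, hrk.trans hrad_le, hik, ?_⟩
  rw [one_div_one_div]
  linarith
end

section
/- Let S ⊆ {1,…,n} and let P be a finite set of compatible index pairs (k,ℓ) with k ≤ ℓ such that: (i) S ⊆ ⋃_{(k,ℓ)∈P} A[k,ℓ]; (ii) for every (k,ℓ) ∈ P, both k ∈ S and ℓ ∈ S; (iii) for every (k,ℓ) ∈ P, neither k nor ℓ belongs to A[k′,ℓ′] for any pair (k′,ℓ′) ∈ P other than (k,ℓ). Then for any two pairs (k,ℓ), (k′,ℓ′) ∈ P with k < k′, either ℓ < k′ (the index ranges are disjoint and A[k,ℓ] precedes A[k′,ℓ′]) or ℓ′ < ℓ (the index range of A[k′,ℓ′] is nested inside that of A[k,ℓ]). -/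
/-- Indices `i ≤ j` are compatible if `i = j`, or `i < j` and both
`r_i ≤ 1/(θ_j - θ_i)` and `r_j ≤ 1/(θ_j - θ_i)`. -/
def Compatible (n : ℕ) (r θ : Fin n → ℝ) (i j : Fin n) : Prop :=
  i = j ∨ (i < j ∧ r i ≤ 1 / (θ j - θ i) ∧ r j ≤ 1 / (θ j - θ i))

/-- For compatible `i ≤ j`, the canonical antenna set `A[i,j]`. -/
noncomputable def capA (n : ℕ) (r θ : Fin n → ℝ) (i j : Fin n) : Finset (Fin n) :=
  if i = j then {i} else antennaSet n r θ (1 / (θ j - θ i)) (θ i)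

/-- In a cover of `S` by canonical antenna sets whose endpoints belong to `S`
and are covered only by their own set, any two sets are either disjoint in index range
(one precedes the other) or one index range is nested inside the other. -/
theorem cover_precede_or_nested (n : ℕ) (r θ : Fin n → ℝ)
    (hr : ∀ j, 0 < r j) (hθ : StrictMono θ)
    (S : Finset (Fin n)) (P : Finset (Fin n × Fin n))
    (hP : ∀ p ∈ P, p.1 ≤ p.2 ∧ Compatible n r θ p.1 p.2)
    (hcover : S ⊆ P.biUnion (fun p => capA n r θ p.1 p.2))
    (hends : ∀ p ∈ P, p.1 ∈ S ∧ p.2 ∈ S)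
    (hfree : ∀ p ∈ P, ∀ q ∈ P, q ≠ p →
      p.1 ∉ capA n r θ q.1 q.2 ∧ p.2 ∉ capA n r θ q.1 q.2) :
    ∀ p ∈ P, ∀ q ∈ P, p.1 < q.1 → p.2 < q.1 ∨ q.2 < p.2 := by
  intro p hp q hq hlt
  by_contra h
  push_neg at h
  obtain ⟨h1, h2⟩ := h
  -- q.1 ≤ p.2 and p.2 ≤ q.2
  have hpq : p ≠ q := fun he => absurd (he ▸ hlt) (lt_irrefl _)
  have hp12 : p.1 < p.2 := lt_of_lt_of_le hlt h1
  -- radial bounds from compatibility of p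
  have hcomp_p := (hP p hp).2
  rcases hcomp_p with he | ⟨_, hrp1, hrp2⟩
  · exact absurd he hp12.ne
  rcases eq_or_lt_of_le (hP q hq).1 with heq | hq12
  · -- q.1 = q.2, so p.2 = q.1 and p.2 ∈ capA q = {q.1}
    have hpq2 : p.2 = q.1 := le_antisymm (heq ▸ h2) h1
    have : p.2 ∈ capA n r θ q.1 q.2 := by
      simp [capA, heq, hpq2]
    exact (hfree p hp q hq hpq.symm).2 this
  · have hcomp_q := (hP q hq).2
    rcases hcomp_q with he | ⟨_, hrq1, hrq2⟩
    · exact absurd he hq12.ne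
    have hΔp : (0:ℝ) < θ p.2 - θ p.1 := sub_pos.mpr (hθ hp12)
    have hΔq : (0:ℝ) < θ q.2 - θ q.1 := sub_pos.mpr (hθ hq12)
    rcases le_total (θ p.2 - θ p.1) (θ q.2 - θ q.1) with hle | hle
    · -- q.1 ∈ capA p
      have hmem : q.1 ∈ capA n r θ p.1 p.2 := by
        simp only [capA, if_neg hp12.ne, antennaSet, Finset.mem_filter, Finset.mem_univ,
          true_and, one_div_one_div]
        refine ⟨le_trans hrq1 (one_div_le_one_div_of_le hΔp hle), le_of_lt (hθ hlt), ?_⟩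
        have : θ q.1 ≤ θ p.2 := hθ.monotone h1
        linarith
      exact (hfree q hq p hp hpq).1 hmem
    · -- p.2 ∈ capA q
      have hmem : p.2 ∈ capA n r θ q.1 q.2 := by
        simp only [capA, if_neg hq12.ne, antennaSet, Finset.mem_filter, Finset.mem_univ,
          true_and, one_div_one_div]
        refine ⟨le_trans hrp2 (one_div_le_one_div_of_le hΔq hle), hθ.monotone h1, ?_⟩
        have : θ p.2 ≤ θ q.2 := hθ.monotone h2
        linarith
      exact (hfree p hp q hq hpq.symm).2 hmem
end

section
/- Let Q ⊆ {1,…,n}. If cost(Q) ≤ D, then Σ_{j∈Q} d_j ≤ (1 + ε₀ + ε₁)·D, where ε₁ = (1+ε₀)^{−k}. -/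
/-- If the decreased cost of `Q` is at most `D`, then the true demand of `Q` is at most
`(1 + ε₀ + ε₁)·D` with `ε₁ = (1+ε₀)^{-k}`.  Here `t i = D(1+ε₀)^{-i}` are the thresholds,
elements `j` with `d j < t k` are small, the other elements are large, the decreased demand
`d' j` of a large element `j` of class `C_i` (i.e. `t (i+1) ≤ d j < t i`, `i < k`) is
`t (i+1)`, and the decreased cost of `Q` is the sum of `d' j` over large `j ∈ Q` plus the
sum of `d j` over small `j ∈ Q` minus the demand of the largest small element of `Q`
(if there is one). -/
theorem decreased_cost_bound (n : ℕ) (d : Fin n → ℝ) (D ε₀ : ℝ) (k : ℕ)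
    (hD : 0 < D) (hε : 0 < ε₀) (hk : 1 ≤ k)
    (hd : ∀ j, 0 ≤ d j ∧ d j < D)
    (t : ℕ → ℝ) (ht : ∀ i, t i = D / (1 + ε₀) ^ i)
    (d' : Fin n → ℝ)
    (hd' : ∀ j, t k ≤ d j → ∃ i, i < k ∧ t (i + 1) ≤ d j ∧ d j < t i ∧ d' j = t (i + 1))
    (Q : Finset (Fin n)) (cost : ℝ)
    (hcost : cost = (∑ j ∈ Q.filter (fun j => t k ≤ d j), d' j) +
      ((∑ j ∈ Q.filter (fun j => d j < t k), d j) -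
        (if h : (Q.filter (fun j => d j < t k)).Nonempty
         then d ((Q.filter (fun j => d j < t k)).max' h) else 0)))
    (hcostD : cost ≤ D) :
    ∑ j ∈ Q, d j ≤ (1 + ε₀ + 1 / (1 + ε₀) ^ k) * D := by
  have hpos : (0:ℝ) < 1 + ε₀ := by linarith
  have hpowpos : ∀ i : ℕ, (0:ℝ) < (1 + ε₀) ^ i := fun i => pow_pos hpos i
  have htpos : ∀ i, 0 < t i := fun i => by rw [ht i]; positivity
  set L := Q.filter (fun j => t k ≤ d j) with hL
  set S := Q.filter (fun j => d j < t k) with hS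
  -- split the sum
  have hsplit : ∑ j ∈ Q, d j = (∑ j ∈ L, d j) + (∑ j ∈ S, d j) := by
    rw [hL, hS, ← Finset.sum_filter_add_sum_filter_not Q (fun j => t k ≤ d j)]
    congr 1
    apply Finset.sum_congr _ (fun _ _ => rfl)
    apply Finset.filter_congr
    intro j _
    simp [not_le]
  -- large elements: d j ≤ (1+ε₀) * d' j
  have hlarge : ∀ j ∈ L, d j ≤ (1 + ε₀) * d' j := by
    intro j hj
    rw [hL, Finset.mem_filter] at hj
    obtain ⟨i, hik, h1, h2, h3⟩ := hd' j hj.2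
    have : t i = (1 + ε₀) * t (i + 1) := by
      rw [ht i, ht (i+1), pow_succ]
      field_simp
    rw [h3]; rw [this] at h2; linarith
  have hLsum : ∑ j ∈ L, d j ≤ (1 + ε₀) * ∑ j ∈ L, d' j := by
    rw [Finset.mul_sum]
    exact Finset.sum_le_sum hlarge
  have hd'nonneg : 0 ≤ ∑ j ∈ L, d' j := by
    apply Finset.sum_nonneg
    intro j hj
    rw [hL, Finset.mem_filter] at hj
    obtain ⟨i, _, h1, _, h3⟩ := hd' j hj.2
    rw [h3]; exact le_of_lt (htpos (i+1))
  by_cases hSne : S.Nonempty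
  · set m := S.max' hSne with hm
    have hmem : m ∈ S := S.max'_mem hSne
    have hmS : d m < t k := by
      rw [hS, Finset.mem_filter] at hmem; exact hmem.2
    have hmle : d m ≤ ∑ j ∈ S, d j :=
      Finset.single_le_sum (fun j _ => (hd j).1) hmem
    have hrem : 0 ≤ (∑ j ∈ S, d j) - d m := by linarith
    have hcost' : cost = (∑ j ∈ L, d' j) + ((∑ j ∈ S, d j) - d m) := by
      rw [hcost]; rw [dif_pos hSne]
    have htk : t k = (1 / (1 + ε₀) ^ k) * D := by
      rw [ht k]; field_simp
    have h1 : (∑ j ∈ S, d j) - d m ≤ (1 + ε₀) * ((∑ j ∈ S, d j) - d m) := by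
      nlinarith
    calc ∑ j ∈ Q, d j = (∑ j ∈ L, d j) + (((∑ j ∈ S, d j) - d m) + d m) := by
            rw [hsplit]; ring
      _ ≤ (1 + ε₀) * (∑ j ∈ L, d' j) + ((1 + ε₀) * ((∑ j ∈ S, d j) - d m) + t k) := by
            have := hmS; linarith
      _ = (1 + ε₀) * cost + t k := by rw [hcost']; ring
      _ ≤ (1 + ε₀) * D + (1 / (1 + ε₀) ^ k) * D := by
            rw [htk]
            have := mul_le_mul_of_nonneg_left hcostD (le_of_lt hpos)
            linarith
      _ = (1 + ε₀ + 1 / (1 + ε₀) ^ k) * D := by ring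
  · have hSempty : S = ∅ := Finset.not_nonempty_iff_eq_empty.mp hSne
    have hcost' : cost = ∑ j ∈ L, d' j := by
      rw [hcost, dif_neg hSne, hSempty]; simp
    have hε₁ : 0 < (1 / (1 + ε₀) ^ k) * D := by positivity
    calc ∑ j ∈ Q, d j = ∑ j ∈ L, d j := by rw [hsplit, hSempty]; simp
      _ ≤ (1 + ε₀) * cost := by rw [hcost']; exact hLsum
      _ ≤ (1 + ε₀) * D := mul_le_mul_of_nonneg_left hcostD (le_of_lt hpos)
      _ ≤ (1 + ε₀ + 1 / (1 + ε₀) ^ k) * D := by nlinarith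
end
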